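/- Fix k ∈ ℕ and m, M : Fin k → ℕ. Then, working in ℚ, the sum over all families a, where a assigns to each index i < k a tuple (a_{i,1}, …, a_{i,m_i}) of positive integers with a_{i,1} + ⋯ + a_{i,m_i} = M_i, of the product Π_{i<k} Π_{j≤m_i} 1/a_{i,j}, equals Π_{i<k} (m_i! / M_i!) · c(M_i, m_i). -/

import Mathlib

/-- Unsigned Stirling numbers of the first kind, defined by the recurrence
`c(n,k) = (n-1)·c(n-1,k) + c(n-1,k-1)` for `n,k > 0`, with `c(0,0) = 1`,
`c(0,k) = 0` for `k > 0` and `c(n,0) = 0` for `n > 0`. -/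
def stirlingFirst : ℕ → ℕ → ℕ
  | 0, 0 => 1
  | 0, _ + 1 => 0
  | _ + 1, 0 => 0
  | n + 1, k + 1 => n * stirlingFirst n (k + 1) + stirlingFirst n k


def comps (M m : ℕ) : Finset (Fin m → ℕ) :=
  (Fintype.piFinset fun _ : Fin m => Finset.Icc 1 M).filter fun t => ∑ j, t j = M

def bnd (N m : ℕ) : Finset (Fin m → ℕ) :=
  (Fintype.piFinset fun _ : Fin m => Finset.Icc 1 N).filter fun t => ∑ j, t j ≤ N

noncomputable def Scomp (M m : ℕ) : ℚ := ∑ t ∈ comps M m, ∏ j, (1:ℚ) / (t j)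

noncomputable def Pcomp (N m : ℕ) : ℚ := ∑ t ∈ bnd N m, ∏ j, (1:ℚ) / (t j)

lemma mem_comps {M m : ℕ} {t : Fin m → ℕ} :
    t ∈ comps M m ↔ (∀ j, 1 ≤ t j) ∧ ∑ j, t j = M := by
  simp only [comps, Finset.mem_filter, Fintype.mem_piFinset, Finset.mem_Icc]
  constructor
  · rintro ⟨h1, h2⟩; exact ⟨fun j => (h1 j).1, h2⟩
  · rintro ⟨h1, h2⟩
    refine ⟨fun j => ⟨h1 j, ?_⟩, h2⟩
    exact h2 ▸ Finset.single_le_sum (fun _ _ => Nat.zero_le _) (Finset.mem_univ j)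

lemma mem_bnd {N m : ℕ} {t : Fin m → ℕ} :
    t ∈ bnd N m ↔ (∀ j, 1 ≤ t j) ∧ ∑ j, t j ≤ N := by
  simp only [bnd, Finset.mem_filter, Fintype.mem_piFinset, Finset.mem_Icc]
  constructor
  · rintro ⟨h1, h2⟩; exact ⟨fun j => (h1 j).1, h2⟩
  · rintro ⟨h1, h2⟩
    refine ⟨fun j => ⟨h1 j, ?_⟩, h2⟩
    exact le_trans (Finset.single_le_sum (fun _ _ => Nat.zero_le _) (Finset.mem_univ j)) h2

lemma Scomp_zero_right (M : ℕ) : Scomp M 0 = if M = 0 then 1 else 0 := by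
  unfold Scomp
  rcases eq_or_ne M 0 with h | h
  · subst h
    rw [if_pos rfl]
    have : comps 0 0 = {(fun j : Fin 0 => 0)} := by
      ext t
      simp only [mem_comps, Finset.mem_singleton]
      constructor
      · intro _; funext j; exact j.elim0
      · intro _; exact ⟨fun j => j.elim0, by simp⟩
    rw [this]; simp
  · rw [if_neg h]
    have : comps M 0 = ∅ := by
      ext t
      simp only [mem_comps, Finset.notMem_empty, iff_false, not_and]
      intro _ hs
      have : (∑ j : Fin 0, t j) = 0 := by simp
      omega
    simp [this]

lemma Scomp_zero_left (m : ℕ) : Scomp 0 (m + 1) = 0 := by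
  have : comps 0 (m + 1) = ∅ := by
    ext t
    simp only [mem_comps, Finset.notMem_empty, iff_false, not_and]
    intro h1 h2
    have := h1 0
    have : 1 ≤ ∑ j, t j :=
      le_trans this (Finset.single_le_sum (fun _ _ => Nat.zero_le _) (Finset.mem_univ 0))
    omega
  simp [Scomp, this]

lemma Pcomp_zero (m : ℕ) : Pcomp 0 m = if m = 0 then 1 else 0 := by
  unfold Pcomp
  rcases Nat.eq_zero_or_pos m with h | h
  · subst h
    have : bnd 0 0 = {(fun j : Fin 0 => 0)} := by
      ext t
      simp only [mem_bnd, Finset.mem_singleton]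
      constructor
      · intro _; funext j; exact j.elim0
      · intro _; exact ⟨fun j => j.elim0, by simp⟩
    rw [this]; simp
  · obtain ⟨m, rfl⟩ := Nat.exists_eq_succ_of_ne_zero h.ne'
    have : bnd 0 (m + 1) = ∅ := by
      ext t
      simp only [mem_bnd, Finset.notMem_empty, iff_false, not_and]
      intro h1 h2
      have := h1 0
      have : 1 ≤ ∑ j, t j :=
        le_trans this (Finset.single_le_sum (fun _ _ => Nat.zero_le _) (Finset.mem_univ 0))
      omega
    simp [this]

lemma Pcomp_succ (N m : ℕ) : Pcomp (N + 1) m = Pcomp N m + Scomp (N + 1) m := by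
  unfold Pcomp Scomp
  have hdisj : Disjoint (bnd N m) (comps (N + 1) m) := by
    rw [Finset.disjoint_left]
    intro t ht ht'
    rw [mem_bnd] at ht; rw [mem_comps] at ht'
    omega
  have hun : bnd (N + 1) m = bnd N m ∪ comps (N + 1) m := by
    ext t
    simp only [mem_bnd, mem_comps, Finset.mem_union]
    constructor
    · rintro ⟨h1, h2⟩
      rcases Nat.lt_or_ge (∑ j, t j) (N + 1) with h | h
      · exact Or.inl ⟨h1, by omega⟩
      · exact Or.inr ⟨h1, by omega⟩
    · rintro (⟨h1, h2⟩ | ⟨h1, h2⟩) <;> exact ⟨h1, by omega⟩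
  rw [hun, Finset.sum_union hdisj]

lemma key_step (M m : ℕ) :
    ((M : ℚ) + 1) * Scomp (M + 1) (m + 1) = ((m : ℚ) + 1) * Pcomp M m := by
  unfold Scomp
  rw [Finset.mul_sum]
  have step1 : ∀ t ∈ comps (M + 1) (m + 1),
      ((M : ℚ) + 1) * ∏ j, (1:ℚ) / (t j) =
        ∑ j : Fin (m + 1), ∏ i : Fin m, (1:ℚ) / (t (j.succAbove i)) := by
    intro t ht
    rw [mem_comps] at ht
    obtain ⟨hpos, hsum⟩ := ht
    have hM : ((M : ℚ) + 1) = ∑ j : Fin (m + 1), (t j : ℚ) := by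
      have : ((M : ℚ) + 1) = ((M + 1 : ℕ) : ℚ) := by push_cast; ring
      rw [this, ← hsum]; push_cast; rfl
    rw [hM, Finset.sum_mul]
    refine Finset.sum_congr rfl fun j _ => ?_
    rw [Fin.prod_univ_succAbove (fun l => (1:ℚ) / (t l)) j]
    have hne : (t j : ℚ) ≠ 0 := by
      have := hpos j; positivity
    rw [← mul_assoc, mul_one_div, div_self hne, one_mul]
  rw [Finset.sum_congr rfl step1, Finset.sum_comm]
  have step2 : ∀ j : Fin (m + 1),
      ∑ t ∈ comps (M + 1) (m + 1), ∏ i : Fin m, (1:ℚ) / (t (j.succAbove i)) =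
        ∑ b ∈ bnd M m, ∏ i : Fin m, (1:ℚ) / (b i) := by
    intro j
    refine Finset.sum_nbij' (fun t => t ∘ j.succAbove)
      (fun b => j.insertNth (M + 1 - ∑ i, b i) b) ?_ ?_ ?_ ?_ ?_
    · intro t ht
      rw [mem_comps] at ht
      rw [mem_bnd]
      refine ⟨fun i => ht.1 _, ?_⟩
      have := Fin.sum_univ_succAbove t j
      have h1 := ht.1 j
      have h2 := ht.2
      simp only [Function.comp]
      omega
    · intro b hb
      rw [mem_bnd] at hb
      rw [mem_comps]
      have hsum : ∑ l, j.insertNth (M + 1 - ∑ i, b i) b l = M + 1 := by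
        rw [Fin.sum_univ_succAbove _ j]
        simp only [Fin.insertNth_apply_same, Fin.insertNth_apply_succAbove]
        omega
      refine ⟨?_, hsum⟩
      have h2 := hb.2
      intro l
      refine Fin.succAboveCases j ?_ ?_ l
      · simp only [Fin.insertNth_apply_same]; omega
      · intro i; simp only [Fin.insertNth_apply_succAbove]; exact hb.1 i
    · intro t ht
      rw [mem_comps] at ht
      show j.insertNth (M + 1 - ∑ i, (t ∘ j.succAbove) i) (t ∘ j.succAbove) = t
      have hv : M + 1 - ∑ i, (t ∘ j.succAbove) i = t j := by
        have h1 := Fin.sum_univ_succAbove t j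
        have h2 := ht.2
        simp only [Function.comp] at *
        omega
      rw [hv]
      exact Fin.insertNth_self_removeNth j t
    · intro b hb
      funext i
      simp [Fin.insertNth_apply_succAbove]
    · intro t ht
      rfl
  rw [Finset.sum_congr rfl (fun j _ => step2 j)]
  rw [Finset.sum_const, Finset.card_univ, Fintype.card_fin, nsmul_eq_mul, Pcomp]
  push_cast
  ring

lemma Scomp_rec (M m : ℕ) :
    ((M : ℚ) + 1) * Scomp (M + 1) (m + 1) =
      (M : ℚ) * Scomp M (m + 1) + ((m : ℚ) + 1) * Scomp M m := by
  rw [key_step]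
  cases M with
  | zero =>
    simp only [Nat.cast_zero, zero_mul, zero_add]
    rw [Pcomp_zero]
    cases m with
    | zero => rw [Scomp_zero_right]
    | succ m' => rw [Scomp_zero_left]; simp
  | succ N =>
    rw [Pcomp_succ]
    have := key_step N m
    push_cast
    push_cast at this
    linarith

lemma key (M m : ℕ) :
    Scomp M m = (m.factorial : ℚ) / (M.factorial : ℚ) * (stirlingFirst M m : ℚ) := by
  induction M generalizing m with
  | zero =>
    cases m with
    | zero => simp [Scomp_zero_right, stirlingFirst]
    | succ m => simp [Scomp_zero_left, stirlingFirst]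
  | succ N ih =>
    cases m with
    | zero =>
      rw [Scomp_zero_right, if_neg (Nat.succ_ne_zero N)]
      simp [stirlingFirst]
    | succ m =>
      have hrec := Scomp_rec N m
      rw [ih (m + 1), ih m] at hrec
      have hN1 : ((N : ℚ) + 1) ≠ 0 := by positivity
      have hfac : (Nat.factorial (N + 1) : ℚ) = ((N : ℚ) + 1) * (Nat.factorial N : ℚ) := by
        push_cast [Nat.factorial_succ]; ring
      have hfacm : (Nat.factorial (m + 1) : ℚ) = ((m : ℚ) + 1) * (Nat.factorial m : ℚ) := by
        push_cast [Nat.factorial_succ]; ring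
      have hst : (stirlingFirst (N + 1) (m + 1) : ℚ) =
          (N : ℚ) * (stirlingFirst N (m + 1) : ℚ) + (stirlingFirst N m : ℚ) := by
        show ((N * stirlingFirst N (m + 1) + stirlingFirst N m : ℕ) : ℚ) = _
        push_cast; ring
      have hfN : (Nat.factorial N : ℚ) ≠ 0 := by positivity
      apply mul_left_cancel₀ hN1
      rw [hrec, hst, hfac, hfacm]
      field_simp

/-- Lemma B.1 ('stirling_sums_multi_1'). The sum, over all families
`a` assigning to each `i < k` a tuple of `m i` positive integers summing to `M i`,
of `∏_i ∏_j 1/a_{i,j}` equals `∏_i (m_i)!/(M_i)! · c(M_i, m_i)` in `ℚ`. -/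
theorem stmt_8 (k : ℕ) (m M : Fin k → ℕ) :
    ∑ a ∈ Fintype.piFinset (fun i : Fin k =>
        (Fintype.piFinset (fun _ : Fin (m i) => Finset.Icc 1 (M i))).filter
          (fun t => ∑ j, t j = M i)),
      ∏ i : Fin k, ∏ j : Fin (m i), (1 : ℚ) / (a i j) =
      ∏ i : Fin k, ((m i).factorial : ℚ) / ((M i).factorial : ℚ) *
        (stirlingFirst (M i) (m i) : ℚ) := by
  exact (Finset.prod_univ_sum (fun i : Fin k => comps (M i) (m i))
      (fun i t => ∏ j : Fin (m i), (1 : ℚ) / (t j))).symm.trans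
    (Finset.prod_congr rfl fun i _ => key (M i) (m i))
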